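/- Let A be a family of functions A_n : [0,∞)^n → [0,∞), one for each integer n ≥ 1, such that: (i) each A_n is continuous in each coordinate; (ii) each A_n is strictly increasing in each coordinate; (iii) A is associative, i.e. A_1(x) = x for all x ≥ 0 and A_n(x_1,…,x_n) = A_2(A_i(x_1,…,x_i), A_{n−i}(x_{i+1},…,x_n)) for all n ≥ 2 and 1 ≤ i < n; and (iv) A is loss compatible, i.e. A_n(0,…,0) = 0 for all n. Then there exists a continuous, strictly increasing function u : [0,∞) → [0,∞) with u(0) = 0 such that for every n ≥ 1 and all x_1,…,x_n ∈ [0,∞), u(A_n(x_1,…,x_n)) = u(x_1) + u(x_2) + ⋯ + u(x_n). -/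

import Mathlib

open scoped NNReal
open Filter Set Topology

namespace Stmt0Aux

structure NiceOp (F : ℝ≥0 → ℝ≥0 → ℝ≥0) : Prop where
  cont₁ : ∀ a, Continuous (fun b => F a b)
  cont₂ : ∀ b, Continuous (fun a => F a b)
  mono₁ : ∀ a, StrictMono (fun b => F a b)
  mono₂ : ∀ b, StrictMono (fun a => F a b)
  assoc : ∀ a b c, F (F a b) c = F a (F b c)
  zero_right : ∀ a, F a 0 = a
  zero_left : ∀ a, F 0 a = a

variable {F : ℝ≥0 → ℝ≥0 → ℝ≥0}

theorem NiceOp.le_left (h : NiceOp F) (a b : ℝ≥0) : a ≤ F a b := by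
  have := (h.mono₁ a).monotone (show (0:ℝ≥0) ≤ b from zero_le)
  simpa [h.zero_right] using this

theorem NiceOp.le_right (h : NiceOp F) (a b : ℝ≥0) : b ≤ F a b := by
  have := (h.mono₂ b).monotone (show (0:ℝ≥0) ≤ a from zero_le)
  simpa [h.zero_left] using this

theorem NiceOp.lt_left (h : NiceOp F) (a : ℝ≥0) {b : ℝ≥0} (hb : 0 < b) : a < F a b := by
  have := h.mono₁ a hb
  simpa [h.zero_right] using this

theorem NiceOp.lt_right (h : NiceOp F) {a : ℝ≥0} (b : ℝ≥0) (ha : 0 < a) : b < F a b := by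
  have := h.mono₂ b ha
  simpa [h.zero_left] using this

def Fpow (F : ℝ≥0 → ℝ≥0 → ℝ≥0) (a : ℝ≥0) : ℕ → ℝ≥0
  | 0 => 0
  | n + 1 => F (Fpow F a n) a

@[simp] theorem Fpow_zero (a : ℝ≥0) : Fpow F a 0 = 0 := rfl

theorem Fpow_succ (a : ℝ≥0) (n : ℕ) : Fpow F a (n + 1) = F (Fpow F a n) a := rfl

theorem Fpow_one (h : NiceOp F) (a : ℝ≥0) : Fpow F a 1 = a := by
  simp [Fpow, h.zero_left]

theorem Fpow_add (h : NiceOp F) (a : ℝ≥0) (m n : ℕ) :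
    Fpow F a (m + n) = F (Fpow F a m) (Fpow F a n) := by
  induction n with
  | zero => simp [h.zero_right]
  | succ n ih =>
      rw [← Nat.add_assoc, Fpow_succ, ih, Fpow_succ, h.assoc]

theorem Fpow_mul (h : NiceOp F) (a : ℝ≥0) (m n : ℕ) :
    Fpow F a (m * n) = Fpow F (Fpow F a n) m := by
  induction m with
  | zero => simp
  | succ m ih =>
      rw [Nat.succ_mul, Fpow_add h, ih, Fpow_succ]

theorem Fpow_lt_succ (h : NiceOp F) {a : ℝ≥0} (ha : 0 < a) (n : ℕ) :
    Fpow F a n < Fpow F a (n + 1) := by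
  rw [Fpow_succ]; exact h.lt_left _ ha

theorem Fpow_strictMono (h : NiceOp F) {a : ℝ≥0} (ha : 0 < a) : StrictMono (Fpow F a) :=
  strictMono_nat_of_lt_succ (Fpow_lt_succ h ha)

theorem Fpow_mono (h : NiceOp F) (a : ℝ≥0) : Monotone (Fpow F a) :=
  monotone_nat_of_le_succ (fun n => by rw [Fpow_succ]; exact h.le_left _ _)

theorem exists_Fpow_gt (h : NiceOp F) {a : ℝ≥0} (ha : 0 < a) (x : ℝ≥0) :
    ∃ n, x < Fpow F a n := by
  by_contra hc
  push_neg at hc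
  have hbdd : BddAbove (Set.range (Fpow F a)) := ⟨x, by rintro _ ⟨n, rfl⟩; exact hc n⟩
  have htend : Tendsto (Fpow F a) atTop (𝓝 (⨆ n, Fpow F a n)) :=
    tendsto_atTop_ciSup (Fpow_mono h a) hbdd
  set L := ⨆ n, Fpow F a n with hL
  have h1 : Tendsto (fun n => Fpow F a (n + 1)) atTop (𝓝 L) :=
    htend.comp (tendsto_add_atTop_nat 1)
  have h2 : Tendsto (fun n => F (Fpow F a n) a) atTop (𝓝 (F L a)) :=
    ((h.cont₂ a).tendsto L).comp htend
  have : F L a = L := tendsto_nhds_unique h2 h1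
  exact absurd this (ne_of_gt (h.lt_left L ha))

theorem sqrt_exists (h : NiceOp F) (y : ℝ≥0) : ∃ s, F s s = y := by
  classical
  set S : Set ℝ≥0 := {b | F b b ≤ y} with hS
  have h0 : (0 : ℝ≥0) ∈ S := by simp [hS, h.zero_right]
  have hne : S.Nonempty := ⟨0, h0⟩
  have hbdd : BddAbove S := ⟨y, fun b hb => le_trans (h.le_left b b) hb⟩
  set s := sSup S with hs
  have hdc : ∀ z, z < s → z ∈ S := by
    intro z hz
    obtain ⟨c, hcS, hzc⟩ := exists_lt_of_lt_csSup hne hz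
    exact le_trans (le_trans ((h.mono₂ z).monotone hzc.le) ((h.mono₁ c).monotone hzc.le)) hcS
  refine ⟨s, ?_⟩
  rcases lt_trichotomy (F s s) y with hlt | heq | hgt
  · exfalso
    -- find z₂ > s with F z₂ z₂ < y, contradicting sSup
    have h1 : ∀ᶠ z in 𝓝[>] s, F z s < y :=
      ((h.cont₂ s).continuousAt.eventually_lt continuousAt_const hlt).filter_mono
        nhdsWithin_le_nhds
    obtain ⟨z₁, hz₁s, hz₁⟩ := (h1.and self_mem_nhdsWithin).exists
    have h2 : ∀ᶠ z in 𝓝[>] s, F z₁ z < y :=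
      ((h.cont₁ z₁).continuousAt.eventually_lt continuousAt_const hz₁s).filter_mono
        nhdsWithin_le_nhds
    have h3 : Ioc s z₁ ∈ 𝓝[>] s := Ioc_mem_nhdsGT_of_mem ⟨le_refl s, hz₁⟩
    obtain ⟨z₂, hz₂lt, hz₂mem⟩ := (h2.and (eventually_of_mem h3 (fun _ h => h))).exists
    have : z₂ ∈ S := le_trans ((h.mono₂ z₂).monotone hz₂mem.2) hz₂lt.le
    exact absurd (le_csSup hbdd this) (not_le.mpr hz₂mem.1)
  · exact heq
  · exfalso
    have hspos : 0 < s := by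
      rcases (show (0:ℝ≥0) ≤ s from zero_le).lt_or_eq with h' | h'
      · exact h'
      · exfalso; rw [← h', h.zero_right] at hgt; exact (show (0:ℝ≥0) ≤ y from zero_le).not_gt hgt
    have hne' : (𝓝[<] s).NeBot := nhdsWithin_Iio_self_neBot' ⟨0, hspos⟩
    have h1 : ∀ᶠ z in 𝓝[<] s, y < F z s :=
      (continuousAt_const.eventually_lt (h.cont₂ s).continuousAt hgt).filter_mono
        nhdsWithin_le_nhds
    obtain ⟨z₁, hz₁gt, hz₁s⟩ := (h1.and self_mem_nhdsWithin).exists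
    have h2 : ∀ᶠ z in 𝓝[<] s, y < F z₁ z :=
      (continuousAt_const.eventually_lt (h.cont₁ z₁).continuousAt hz₁gt).filter_mono
        nhdsWithin_le_nhds
    have h3 : Ico z₁ s ∈ 𝓝[<] s := Ico_mem_nhdsLT_of_mem ⟨hz₁s, le_refl s⟩
    obtain ⟨z₂, hz₂gt, hz₂mem⟩ := (h2.and (eventually_of_mem h3 (fun _ h => h))).exists
    have hz₂S : z₂ ∈ S := hdc z₂ hz₂mem.2
    have : y < F z₂ z₂ := lt_of_lt_of_le hz₂gt ((h.mono₂ z₂).monotone hz₂mem.1)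
    exact absurd hz₂S (not_le.mpr this)

theorem solv (h : NiceOp F) {x y : ℝ≥0} (hxy : x ≤ y) : ∃ t, F x t = y := by
  have hc : ContinuousOn (fun t => F x t) (Icc 0 y) := (h.cont₁ x).continuousOn
  have : y ∈ Icc (F x 0) (F x y) := by
    rw [h.zero_right]; exact ⟨hxy, h.le_right x y⟩
  obtain ⟨t, _, ht⟩ := intermediate_value_Icc (show (0:ℝ≥0) ≤ y from zero_le) hc this
  exact ⟨t, ht⟩

noncomputable def wseq (F : ℝ≥0 → ℝ≥0 → ℝ≥0) (hsq : ∀ y : ℝ≥0, ∃ s, F s s = y) : ℕ → ℝ≥0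
  | 0 => 1
  | k + 1 => (hsq (wseq F hsq k)).choose

theorem wseq_spec (hsq : ∀ y : ℝ≥0, ∃ s, F s s = y) (k : ℕ) :
    F (wseq F hsq (k + 1)) (wseq F hsq (k + 1)) = wseq F hsq k :=
  (hsq (wseq F hsq k)).choose_spec


section Core

variable (h : NiceOp F) (hsq : ∀ y : ℝ≥0, ∃ s, F s s = y)

include h

omit h in
theorem wseq_zero : wseq F hsq 0 = 1 := rfl

theorem wseq_pos (k : ℕ) : 0 < wseq F hsq k := by
  induction k with
  | zero => rw [wseq_zero]; exact one_pos
  | succ k ih =>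
      rcases (show (0:ℝ≥0) ≤ wseq F hsq (k+1) from zero_le).lt_or_eq with h' | h'
      · exact h'
      · exfalso
        have := wseq_spec hsq k
        rw [← h', h.zero_right] at this
        exact (ne_of_gt ih) this.symm

theorem wseq_anti : Antitone (wseq F hsq) := by
  refine antitone_nat_of_succ_le (fun k => ?_)
  conv_rhs => rw [← wseq_spec hsq k]
  exact h.le_left _ _

theorem wseq_tendsto : Tendsto (wseq F hsq) atTop (𝓝 0) := by
  have hbdd : BddBelow (Set.range (wseq F hsq)) := OrderBot.bddBelow _
  have htend : Tendsto (wseq F hsq) atTop (𝓝 (⨅ k, wseq F hsq k)) :=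
    tendsto_atTop_ciInf (wseq_anti h hsq) hbdd
  set L := ⨅ k, wseq F hsq k with hL
  have hle : ∀ k, L ≤ wseq F hsq k := fun k => ciInf_le hbdd k
  have h1 : F L L ≤ L := by
    refine le_ciInf (fun k => ?_)
    calc F L L ≤ F (wseq F hsq (k+1)) (wseq F hsq (k+1)) := by
          exact le_trans ((h.mono₂ L).monotone (hle (k+1))) ((h.mono₁ _).monotone (hle (k+1)))
      _ = wseq F hsq k := wseq_spec hsq k
  have hL0 : L = 0 := by
    by_contra hc
    have hpos : 0 < L := (show (0:ℝ≥0) ≤ L from zero_le).lt_of_ne (Ne.symm hc)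
    exact absurd h1 (not_le.mpr (h.lt_left L hpos))
  rwa [hL0] at htend

theorem wseq_pow_two (k : ℕ) : Fpow F (wseq F hsq (k+1)) 2 = wseq F hsq k := by
  rw [show (2:ℕ) = 1 + 1 from rfl, Fpow_succ, Fpow_one h]
  exact wseq_spec hsq k

theorem wseq_double (k m : ℕ) :
    Fpow F (wseq F hsq (k+1)) (2 * m) = Fpow F (wseq F hsq k) m := by
  rw [mul_comm, Fpow_mul h, wseq_pow_two h hsq]

/-- the largest `m` with `Fpow (w k) m ≤ x` -/
noncomputable def Nfun (hsq : ∀ y : ℝ≥0, ∃ s, F s s = y) (x : ℝ≥0) (k : ℕ) : ℕ :=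
  sSup {m | Fpow F (wseq F hsq k) m ≤ x}

theorem Nfun_bdd (x : ℝ≥0) (k : ℕ) : BddAbove {m | Fpow F (wseq F hsq k) m ≤ x} := by
  obtain ⟨n, hn⟩ := exists_Fpow_gt h (wseq_pos h hsq k) x
  refine ⟨n, fun m hm => ?_⟩
  have : Fpow F (wseq F hsq k) m < Fpow F (wseq F hsq k) n := lt_of_le_of_lt hm hn
  exact ((Fpow_strictMono h (wseq_pos h hsq k)).lt_iff_lt.mp this).le

theorem Nfun_le (x : ℝ≥0) (k : ℕ) : Fpow F (wseq F hsq k) (Nfun hsq x k) ≤ x :=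
  Nat.sSup_mem ⟨0, by simp⟩ (Nfun_bdd h hsq x k)

theorem Nfun_max {x : ℝ≥0} {k m : ℕ} (hm : Fpow F (wseq F hsq k) m ≤ x) :
    m ≤ Nfun hsq x k :=
  le_csSup (Nfun_bdd h hsq x k) hm

theorem Nfun_lt (x : ℝ≥0) (k : ℕ) : x < Fpow F (wseq F hsq k) (Nfun hsq x k + 1) := by
  by_contra hc
  push_neg at hc
  have := Nfun_max h hsq hc
  omega

theorem Nfun_mono {x y : ℝ≥0} (hxy : x ≤ y) (k : ℕ) : Nfun hsq x k ≤ Nfun hsq y k :=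
  Nfun_max h hsq (le_trans (Nfun_le h hsq x k) hxy)

theorem Nfun_step (x : ℝ≥0) (k : ℕ) :
    2 * Nfun hsq x k ≤ Nfun hsq x (k+1) ∧ Nfun hsq x (k+1) ≤ 2 * Nfun hsq x k + 1 := by
  constructor
  · exact Nfun_max h hsq (by rw [wseq_double h hsq]; exact Nfun_le h hsq x k)
  · have h2 : x < Fpow F (wseq F hsq (k+1)) (2 * Nfun hsq x k + 2) := by
      have e : 2 * Nfun hsq x k + 2 = 2 * (Nfun hsq x k + 1) := by ring
      rw [e, wseq_double h hsq]
      exact Nfun_lt h hsq x k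
    have hlt : Fpow F (wseq F hsq (k+1)) (Nfun hsq x (k+1)) <
        Fpow F (wseq F hsq (k+1)) (2 * Nfun hsq x k + 2) :=
      lt_of_le_of_lt (Nfun_le h hsq x (k+1)) h2
    have := (Fpow_strictMono h (wseq_pos h hsq (k+1))).lt_iff_lt.mp hlt
    omega

/-- the dyadic approximations -/
noncomputable def dfun (hsq : ∀ y : ℝ≥0, ∃ s, F s s = y) (x : ℝ≥0) (k : ℕ) : ℝ :=
  (Nfun hsq x k : ℝ) / 2 ^ k

theorem dfun_mono (x : ℝ≥0) : Monotone (dfun (F := F) hsq x) := by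
  refine monotone_nat_of_le_succ (fun k => ?_)
  have h2 : ((2 * Nfun hsq x k : ℕ) : ℝ) ≤ (Nfun hsq x (k+1) : ℝ) := by
    exact_mod_cast (Nfun_step h hsq x k).1
  push_cast at h2
  rw [dfun, dfun, div_le_div_iff₀ (by positivity) (by positivity)]
  calc (Nfun hsq x k : ℝ) * 2 ^ (k+1) = 2 * (Nfun hsq x k : ℝ) * 2 ^ k := by ring
    _ ≤ (Nfun hsq x (k+1) : ℝ) * 2 ^ k := by
        exact mul_le_mul_of_nonneg_right h2 (by positivity)

theorem dfun_step (x : ℝ≥0) (k : ℕ) :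
    dfun hsq x (k+1) ≤ dfun hsq x k + 1 / 2 ^ (k+1) := by
  have h2 : (Nfun hsq x (k+1) : ℝ) ≤ 2 * (Nfun hsq x k : ℝ) + 1 := by
    exact_mod_cast (Nfun_step h hsq x k).2
  rw [dfun, dfun]
  calc (Nfun hsq x (k+1) : ℝ) / 2 ^ (k+1) ≤ (2 * (Nfun hsq x k : ℝ) + 1) / 2 ^ (k+1) :=
        (div_le_div_iff_of_pos_right (by positivity)).mpr h2
    _ = (Nfun hsq x k : ℝ) / 2 ^ k + 1 / 2 ^ (k+1) := by
        rw [pow_succ]; field_simp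

theorem dfun_bound (x : ℝ≥0) (k p : ℕ) :
    dfun hsq x (k + p) ≤ dfun hsq x k + 1 / 2 ^ k - 1 / 2 ^ (k + p) := by
  induction p with
  | zero => simp
  | succ p ih =>
      have e : (1:ℝ) / 2 ^ (k+p) = 2 / 2 ^ (k+p+1) := by
        rw [pow_succ]; field_simp
      have := dfun_step h hsq x (k + p)
      have e2 : k + (p+1) = (k + p) + 1 := by ring
      rw [e2]
      calc dfun hsq x ((k+p)+1) ≤ dfun hsq x (k+p) + 1 / 2 ^ (k+p+1) := this
        _ ≤ dfun hsq x k + 1 / 2 ^ k - 1 / 2 ^ (k+p) + 1/2^(k+p+1) := by linarith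
        _ = dfun hsq x k + 1 / 2 ^ k - 1 / 2 ^ ((k+p)+1) := by rw [e]; ring

theorem dfun_bddAbove (x : ℝ≥0) : BddAbove (Set.range (dfun (F := F) hsq x)) := by
  refine ⟨dfun hsq x 0 + 1, ?_⟩
  rintro _ ⟨j, rfl⟩
  have := dfun_bound h hsq x 0 j
  simp only [Nat.zero_add, pow_zero] at this
  have hj : (0:ℝ) ≤ 1 / 2 ^ j := by positivity
  linarith

/-- the utility function, as a real number -/
noncomputable def ufun (hsq : ∀ y : ℝ≥0, ∃ s, F s s = y) (x : ℝ≥0) : ℝ :=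
  ⨆ k, dfun hsq x k

theorem dfun_le_ufun (x : ℝ≥0) (k : ℕ) : dfun hsq x k ≤ ufun hsq x :=
  le_ciSup (dfun_bddAbove h hsq x) k

theorem ufun_le_dfun (x : ℝ≥0) (k : ℕ) : ufun hsq x ≤ dfun hsq x k + 1 / 2 ^ k := by
  refine ciSup_le (fun j => ?_)
  rcases le_total j k with hjk | hkj
  · have := dfun_mono h hsq x hjk
    have hk : (0:ℝ) ≤ 1 / 2 ^ k := by positivity
    linarith
  · obtain ⟨p, rfl⟩ := Nat.exists_eq_add_of_le hkj
    have := dfun_bound h hsq x k p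
    have hk : (0:ℝ) ≤ 1 / 2 ^ (k + p) := by positivity
    linarith

theorem ufun_nonneg (x : ℝ≥0) : 0 ≤ ufun hsq x := by
  refine le_trans ?_ (dfun_le_ufun h hsq x 0)
  rw [dfun]; positivity

theorem ufun_zero : ufun (F := F) hsq 0 = 0 := by
  have hN : ∀ k, Nfun (F := F) hsq 0 k = 0 := by
    intro k
    by_contra hc
    have h1 : 1 ≤ Nfun (F := F) hsq 0 k := Nat.one_le_iff_ne_zero.mpr hc
    have h2 : Fpow F (wseq F hsq k) 1 ≤ Fpow F (wseq F hsq k) (Nfun hsq 0 k) :=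
      Fpow_mono h _ h1
    rw [Fpow_one h] at h2
    have h3 := le_trans h2 (Nfun_le h hsq 0 k)
    exact absurd h3 (not_le.mpr (wseq_pos h hsq k))
  have : ∀ k, dfun (F := F) hsq 0 k = 0 := by intro k; rw [dfun, hN]; simp
  rw [ufun]
  simp [this]

theorem ufun_monotone : Monotone (ufun (F := F) hsq) := by
  intro x y hxy
  refine ciSup_le (fun k => le_trans ?_ (dfun_le_ufun h hsq y k))
  rw [dfun, dfun]
  have := Nfun_mono h hsq hxy k
  exact (div_le_div_iff_of_pos_right (by positivity)).mpr (by exact_mod_cast this)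

theorem ufun_add (x y : ℝ≥0) : ufun hsq (F x y) = ufun hsq x + ufun hsq y := by
  have key : ∀ k : ℕ, |ufun hsq (F x y) - (ufun hsq x + ufun hsq y)| ≤ 4 / 2 ^ k := by
    intro k
    have hl : Nfun hsq x k + Nfun hsq y k ≤ Nfun hsq (F x y) k := by
      refine Nfun_max h hsq ?_
      rw [Fpow_add h]
      calc F (Fpow F (wseq F hsq k) (Nfun hsq x k)) (Fpow F (wseq F hsq k) (Nfun hsq y k))
          ≤ F x (Fpow F (wseq F hsq k) (Nfun hsq y k)) :=
            (h.mono₂ _).monotone (Nfun_le h hsq x k)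
        _ ≤ F x y := (h.mono₁ _).monotone (Nfun_le h hsq y k)
    have hr : Nfun hsq (F x y) k ≤ Nfun hsq x k + Nfun hsq y k + 1 := by
      have h2 : F x y < Fpow F (wseq F hsq k) (Nfun hsq x k + Nfun hsq y k + 2) := by
        have e : Nfun hsq x k + Nfun hsq y k + 2 = (Nfun hsq x k + 1) + (Nfun hsq y k + 1) := by
          ring
        rw [e, Fpow_add h]
        calc F x y < F (Fpow F (wseq F hsq k) (Nfun hsq x k + 1)) y :=
              h.mono₂ y (Nfun_lt h hsq x k)
          _ ≤ F (Fpow F (wseq F hsq k) (Nfun hsq x k + 1))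
              (Fpow F (wseq F hsq k) (Nfun hsq y k + 1)) :=
              (h.mono₁ _).monotone (Nfun_lt h hsq y k).le
      have hlt := lt_of_le_of_lt (Nfun_le h hsq (F x y) k) h2
      have := (Fpow_strictMono h (wseq_pos h hsq k)).lt_iff_lt.mp hlt
      omega
    set p := (Nfun hsq x k : ℝ) with hp
    set q := (Nfun hsq y k : ℝ) with hq
    set s := (Nfun hsq (F x y) k : ℝ) with hsv
    have hl' : p + q ≤ s := by rw [hp, hq, hsv]; exact_mod_cast hl
    have hr' : s ≤ p + q + 1 := by rw [hp, hq, hsv]; exact_mod_cast hr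
    have ht : (0:ℝ) < 2 ^ k := by positivity
    have e2 : p / 2^k + q / 2^k ≤ s / 2^k := by
      rw [← add_div]; exact (div_le_div_iff_of_pos_right ht).mpr hl'
    have e1 : s / 2^k ≤ p / 2^k + q / 2^k + 1 / 2^k := by
      rw [← add_div, ← add_div]; exact (div_le_div_iff_of_pos_right ht).mpr hr'
    have b1 : p / 2^k ≤ ufun hsq x := dfun_le_ufun h hsq x k
    have b2 : ufun hsq x ≤ p / 2^k + 1 / 2^k := ufun_le_dfun h hsq x k
    have b3 : q / 2^k ≤ ufun hsq y := dfun_le_ufun h hsq y k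
    have b4 : ufun hsq y ≤ q / 2^k + 1 / 2^k := ufun_le_dfun h hsq y k
    have b5 : s / 2^k ≤ ufun hsq (F x y) := dfun_le_ufun h hsq (F x y) k
    have b6 : ufun hsq (F x y) ≤ s / 2^k + 1 / 2^k := ufun_le_dfun h hsq (F x y) k
    have e4 : (4:ℝ) / 2^k = 4 * (1 / 2^k) := by ring
    rw [abs_sub_le_iff]
    constructor <;> [skip; skip] <;> linarith
  have htend : Tendsto (fun k : ℕ => (4:ℝ) / 2 ^ k) atTop (𝓝 0) := by
    have h1 : Tendsto (fun k : ℕ => ((1:ℝ)/2) ^ k) atTop (𝓝 0) :=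
      tendsto_pow_atTop_nhds_zero_of_lt_one (by norm_num) (by norm_num)
    have := h1.const_mul (4:ℝ)
    simp only [mul_zero] at this
    convert this using 2 with k
    rw [div_pow, one_pow]
    ring
  have habs : |ufun hsq (F x y) - (ufun hsq x + ufun hsq y)| ≤ 0 :=
    ge_of_tendsto htend (Filter.Eventually.of_forall key)
  have := abs_nonpos_iff.mp habs
  linarith

theorem wseq_lt {z : ℝ≥0} (hz : 0 < z) : ∃ k, wseq F hsq k < z := by
  have hev : ∀ᶠ k in atTop, wseq F hsq k < z :=
    (wseq_tendsto h hsq).eventually_lt_const hz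
  exact hev.exists

end Core


section Core2

variable (h : NiceOp F) (hsq : ∀ y : ℝ≥0, ∃ s, F s s = y)

include h

theorem ufun_pos {z : ℝ≥0} (hz : 0 < z) : 0 < ufun hsq z := by
  obtain ⟨k, hk⟩ := wseq_lt h hsq hz
  have h1 : 1 ≤ Nfun hsq z k :=
    Nfun_max h hsq (by rw [Fpow_one h]; exact hk.le)
  have h2 : (1:ℝ) / 2 ^ k ≤ dfun hsq z k := by
    rw [dfun]
    exact (div_le_div_iff_of_pos_right (by positivity)).mpr (by exact_mod_cast h1)
  have h3 : (0:ℝ) < 1 / 2 ^ k := by positivity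
  linarith [dfun_le_ufun h hsq z k]

theorem ufun_strictMono : StrictMono (ufun (F := F) hsq) := by
  intro x y hxy
  obtain ⟨t, ht⟩ := solv h hxy.le
  have htpos : 0 < t := by
    rcases (show (0:ℝ≥0) ≤ t from zero_le).lt_or_eq with h' | h'
    · exact h'
    · exfalso; rw [← h', h.zero_right] at ht; exact hxy.ne ht
  calc ufun hsq x < ufun hsq x + ufun hsq t := lt_add_of_pos_right _ (ufun_pos h hsq htpos)
    _ = ufun hsq (F x t) := (ufun_add h hsq x t).symm
    _ = ufun hsq y := by rw [ht]

theorem ufun_wseq_le (k : ℕ) : ufun hsq (wseq F hsq k) ≤ 2 / 2 ^ k := by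
  have hN : Nfun hsq (wseq F hsq k) k = 1 := by
    refine le_antisymm ?_ (Nfun_max h hsq (by rw [Fpow_one h]))
    have h2 : wseq F hsq k < Fpow F (wseq F hsq k) 2 := by
      rw [show (2:ℕ) = 1 + 1 from rfl, Fpow_succ, Fpow_one h]
      exact h.lt_left _ (wseq_pos h hsq k)
    have hlt : Fpow F (wseq F hsq k) (Nfun hsq (wseq F hsq k) k) <
        Fpow F (wseq F hsq k) 2 := lt_of_le_of_lt (Nfun_le h hsq _ k) h2
    have := (Fpow_strictMono h (wseq_pos h hsq k)).lt_iff_lt.mp hlt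
    omega
  have := ufun_le_dfun h hsq (wseq F hsq k) k
  rw [dfun, hN] at this
  push_cast at this
  have e : (2:ℝ)/2^k = 1/2^k + 1/2^k := by ring
  linarith

theorem ufun_surj {r : ℝ} (hr : 0 ≤ r) : ∃ x, ufun (F := F) hsq x = r := by
  classical
  set S : Set ℝ≥0 := {y | ufun hsq y ≤ r} with hS
  have h0S : (0:ℝ≥0) ∈ S := by
    simp only [hS, Set.mem_setOf_eq, ufun_zero h hsq]; exact hr
  have hSne : S.Nonempty := ⟨0, h0S⟩
  have hSbdd : BddAbove S := by
    obtain ⟨m, hm⟩ := exists_nat_gt r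
    refine ⟨Fpow F (wseq F hsq 0) m, fun y hy => ?_⟩
    by_contra hc
    push_neg at hc
    have h1 : (m:ℝ) ≤ dfun hsq (Fpow F (wseq F hsq 0) m) 0 := by
      rw [dfun, pow_zero, div_one]
      exact_mod_cast Nfun_max h hsq (le_refl _)
    have h2 : (m:ℝ) ≤ ufun hsq (Fpow F (wseq F hsq 0) m) :=
      le_trans h1 (dfun_le_ufun h hsq _ 0)
    have h3 := le_trans h2 (ufun_monotone h hsq hc.le)
    rw [hS] at hy
    have : (m:ℝ) ≤ r := le_trans h3 hy
    linarith
  set x := sSup S with hx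
  have htend2 : Tendsto (fun k : ℕ => (2:ℝ) / 2 ^ k) atTop (𝓝 0) := by
    have h1 : Tendsto (fun k : ℕ => ((1:ℝ)/2) ^ k) atTop (𝓝 0) :=
      tendsto_pow_atTop_nhds_zero_of_lt_one (by norm_num) (by norm_num)
    have := h1.const_mul (2:ℝ)
    simp only [mul_zero] at this
    convert this using 2 with k
    rw [div_pow, one_pow]; ring
  have hxle : ufun hsq x ≤ r := by
    have hk : ∀ k : ℕ, ufun hsq x ≤ r + 2 / 2 ^ k := by
      intro k
      have hψ : F x (wseq F hsq k) = sSup ((fun z => F z (wseq F hsq k)) '' S) :=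
        Monotone.map_csSup_of_continuousAt ((h.cont₂ (wseq F hsq k)).continuousAt)
          (h.mono₂ (wseq F hsq k)).monotone hSne hSbdd
      have hxlt : x < F x (wseq F hsq k) := h.lt_left x (wseq_pos h hsq k)
      have hlt2 : x < sSup ((fun z => F z (wseq F hsq k)) '' S) := by rw [← hψ]; exact hxlt
      obtain ⟨_, ⟨y, hyS, rfl⟩, hygt⟩ := exists_lt_of_lt_csSup (hSne.image _) hlt2
      have h1 : ufun hsq x ≤ ufun hsq (F y (wseq F hsq k)) :=
        ufun_monotone h hsq hygt.le
      rw [ufun_add h hsq] at h1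
      rw [hS] at hyS
      exact le_trans h1 (add_le_add hyS (ufun_wseq_le h hsq k))
    have : Tendsto (fun k : ℕ => r + 2 / 2 ^ k) atTop (𝓝 r) := by
      simpa using tendsto_const_nhds.add htend2
    exact ge_of_tendsto this (Filter.Eventually.of_forall hk)
  have hxge : r ≤ ufun hsq x := by
    by_contra hc
    push_neg at hc
    have : ∀ᶠ k in atTop, ufun hsq x + 2 / 2 ^ k < r := by
      have : Tendsto (fun k : ℕ => ufun hsq x + 2 / 2 ^ k) atTop (𝓝 (ufun hsq x)) := by
        simpa using tendsto_const_nhds.add htend2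
      exact this.eventually_lt_const hc
    obtain ⟨k, hk⟩ := this.exists
    have hmem : F x (wseq F hsq k) ∈ S := by
      rw [hS, Set.mem_setOf_eq, ufun_add h hsq]
      have := ufun_wseq_le h hsq k
      linarith
    have := le_csSup hSbdd hmem
    exact absurd this (not_le.mpr (h.lt_left x (wseq_pos h hsq k)))
  exact ⟨x, le_antisymm hxle hxge⟩

end Core2

theorem core (h : NiceOp F) :
    ∃ u : ℝ≥0 → ℝ≥0, Continuous u ∧ StrictMono u ∧ u 0 = 0 ∧
      ∀ a b, u (F a b) = u a + u b := by
  have hsq := sqrt_exists h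
  set v : ℝ≥0 → ℝ≥0 := fun x => ⟨ufun hsq x, ufun_nonneg h hsq x⟩ with hv
  have hvs : StrictMono v := by
    intro a b hab
    have := ufun_strictMono h hsq hab
    exact this
  have hvsurj : Function.Surjective v := by
    intro r
    obtain ⟨x, hx⟩ := ufun_surj h hsq r.2
    exact ⟨x, Subtype.ext hx⟩
  have hvcont : Continuous v := by
    have h1 : Continuous (StrictMono.orderIsoOfSurjective v hvs hvsurj : ℝ≥0 → ℝ≥0) :=
      OrderIso.continuous _
    rwa [StrictMono.coe_orderIsoOfSurjective] at h1
  refine ⟨v, hvcont, hvs, ?_, ?_⟩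
  · exact Subtype.ext (ufun_zero h hsq)
  · intro a b
    refine Subtype.ext ?_
    push_cast
    exact ufun_add h hsq a b

end Stmt0Aux


/-- **Axiomatical characterization of loss aggregations (quasi-sum part).**
A family `A n : [0,∞)ⁿ → [0,∞)` that is continuous and strictly increasing in each
coordinate, associative, and loss compatible is a quasi-sum: there is a continuous,
strictly increasing `u : [0,∞) → [0,∞)` with `u 0 = 0` such that
`u (A n (x₁,…,xₙ)) = u x₁ + ⋯ + u xₙ`. -/
theorem stmt_0
    (A : (n : ℕ) → (Fin n → ℝ) → ℝ)
    -- A maps [0,∞)^n into [0,∞)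
    (hA_nonneg : ∀ (n : ℕ) (x : Fin n → ℝ), (∀ i, 0 ≤ x i) → 0 ≤ A n x)
    -- (A1) continuity in each coordinate
    (hA_cont : ∀ (n : ℕ) (x : Fin n → ℝ), (∀ i, 0 ≤ x i) → ∀ i : Fin n,
      ContinuousOn (fun y => A n (Function.update x i y)) (Set.Ici (0 : ℝ)))
    -- (A2) strictly increasing in each coordinate
    (hA_mono : ∀ (n : ℕ) (x : Fin n → ℝ), (∀ i, 0 ≤ x i) → ∀ i : Fin n,
      StrictMonoOn (fun y => A n (Function.update x i y)) (Set.Ici (0 : ℝ)))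
    -- (A3) associativity: A₁ is the identity …
    (hA_one : ∀ x : ℝ, 0 ≤ x → A 1 (fun _ => x) = x)
    -- … and A_{m+k}(x) = A₂(A_m(x₁,…,x_m), A_k(x_{m+1},…,x_{m+k}))
    (hA_assoc : ∀ (m k : ℕ), 1 ≤ m → 1 ≤ k → ∀ x : Fin (m + k) → ℝ, (∀ i, 0 ≤ x i) →
      A (m + k) x =
        A 2 ![A m (fun j => x (Fin.castAdd k j)), A k (fun j => x (Fin.natAdd m j))])
    -- (A4) loss compatibility: A_n(0,…,0) = 0
    (hA_zero : ∀ n : ℕ, 1 ≤ n → A n (fun _ => 0) = 0) :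
    ∃ u : ℝ → ℝ,
      ContinuousOn u (Set.Ici (0 : ℝ)) ∧
      StrictMonoOn u (Set.Ici (0 : ℝ)) ∧
      u 0 = 0 ∧
      (∀ x : ℝ, 0 ≤ x → 0 ≤ u x) ∧
      (∀ (n : ℕ), 1 ≤ n → ∀ x : Fin n → ℝ, (∀ i, 0 ≤ x i) →
        u (A n x) = ∑ i, u (x i)) := by
  classical
  -- vector helpers
  have hmem2 : ∀ a b : ℝ, 0 ≤ a → 0 ≤ b → ∀ i, 0 ≤ (![a,b] : Fin 2 → ℝ) i := by
    intro a b ha hb i; fin_cases i <;> simpa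
  have hmem3 : ∀ a b c : ℝ, 0 ≤ a → 0 ≤ b → 0 ≤ c → ∀ i, 0 ≤ (![a,b,c] : Fin 3 → ℝ) i := by
    intro a b c ha hb hc i; fin_cases i <;> simpa
  have hupd1 : ∀ a y : ℝ, Function.update ![a, (0:ℝ)] 1 y = ![a, y] := by
    intro a y; funext i; fin_cases i <;> simp [Function.update]
  have hupd0 : ∀ b y : ℝ, Function.update ![(0:ℝ), b] 0 y = ![y, b] := by
    intro b y; funext i; fin_cases i <;> simp [Function.update]
  -- nonnegativity of A 2
  have hGnn : ∀ a b : ℝ, 0 ≤ a → 0 ≤ b → 0 ≤ A 2 ![a, b] := fun a b ha hb =>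
    hA_nonneg 2 _ (hmem2 a b ha hb)
  -- monotonicity / continuity of A 2 in each coordinate
  have hA2mono1 : ∀ a : ℝ, 0 ≤ a → StrictMonoOn (fun y => A 2 ![a, y]) (Set.Ici 0) := by
    intro a ha
    have h := hA_mono 2 ![a, 0] (hmem2 a 0 ha le_rfl) 1
    simpa only [hupd1] using h
  have hA2mono2 : ∀ b : ℝ, 0 ≤ b → StrictMonoOn (fun y => A 2 ![y, b]) (Set.Ici 0) := by
    intro b hb
    have h := hA_mono 2 ![0, b] (hmem2 0 b le_rfl hb) 0
    simpa only [hupd0] using h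
  have hA2cont1 : ∀ a : ℝ, 0 ≤ a → ContinuousOn (fun y => A 2 ![a, y]) (Set.Ici 0) := by
    intro a ha
    have h := hA_cont 2 ![a, 0] (hmem2 a 0 ha le_rfl) 1
    simpa only [hupd1] using h
  have hA2cont2 : ∀ b : ℝ, 0 ≤ b → ContinuousOn (fun y => A 2 ![y, b]) (Set.Ici 0) := by
    intro b hb
    have h := hA_cont 2 ![0, b] (hmem2 0 b le_rfl hb) 0
    simpa only [hupd0] using h
  -- A 2 at zero
  have hz2 : A 2 ![(0:ℝ), (0:ℝ)] = 0 := by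
    have e : (![(0:ℝ),(0:ℝ)] : Fin 2 → ℝ) = fun _ => 0 := by
      funext i; fin_cases i <;> rfl
    rw [e]; exact hA_zero 2 (by norm_num)
  -- splittings of A 3
  have split12 : ∀ a b c : ℝ, 0 ≤ a → 0 ≤ b → 0 ≤ c →
      A 3 ![a,b,c] = A 2 ![a, A 2 ![b,c]] := by
    intro a b c ha hb hc
    have h := hA_assoc 1 2 le_rfl (by norm_num) ![a,b,c] (hmem3 a b c ha hb hc)
    have e1 : (fun j : Fin 1 => (![a,b,c] : Fin 3 → ℝ) (Fin.castAdd 2 j)) = fun _ => a := by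
      funext j; fin_cases j; rfl
    have e2 : (fun j : Fin 2 => (![a,b,c] : Fin 3 → ℝ) (Fin.natAdd 1 j)) = ![b,c] := by
      funext j; fin_cases j <;> rfl
    rw [e1, e2, hA_one a ha] at h
    exact h
  have split21 : ∀ a b c : ℝ, 0 ≤ a → 0 ≤ b → 0 ≤ c →
      A 3 ![a,b,c] = A 2 ![A 2 ![a,b], c] := by
    intro a b c ha hb hc
    have h := hA_assoc 2 1 (by norm_num) le_rfl ![a,b,c] (hmem3 a b c ha hb hc)
    have e1 : (fun j : Fin 2 => (![a,b,c] : Fin 3 → ℝ) (Fin.castAdd 1 j)) = ![a,b] := by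
      funext j; fin_cases j <;> rfl
    have e2 : (fun j : Fin 1 => (![a,b,c] : Fin 3 → ℝ) (Fin.natAdd 2 j)) = fun _ => c := by
      funext j; fin_cases j; rfl
    rw [e1, e2, hA_one c hc] at h
    exact h
  -- 0 is a two-sided identity for A 2
  have hid_r : ∀ t : ℝ, 0 ≤ t → A 2 ![t, 0] = t := by
    intro t ht
    have h1 := split12 t 0 0 ht le_rfl le_rfl
    rw [hz2] at h1
    have h2 := split21 t 0 0 ht le_rfl le_rfl
    have h3 : A 2 ![A 2 ![t, 0], (0:ℝ)] = A 2 ![t, 0] := by rw [← h2, h1]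
    exact (hA2mono2 0 le_rfl).injOn (hGnn t 0 ht le_rfl) ht h3
  have hid_l : ∀ t : ℝ, 0 ≤ t → A 2 ![0, t] = t := by
    intro t ht
    have h1 := split21 0 0 t le_rfl le_rfl ht
    rw [hz2] at h1
    have h2 := split12 0 0 t le_rfl le_rfl ht
    have h3 : A 2 ![(0:ℝ), A 2 ![0, t]] = A 2 ![0, t] := by rw [← h2, h1]
    exact (hA2mono1 0 le_rfl).injOn (hGnn 0 t le_rfl ht) ht h3
  -- associativity of A 2
  have hassoc2 : ∀ a b c : ℝ, 0 ≤ a → 0 ≤ b → 0 ≤ c →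
      A 2 ![A 2 ![a,b], c] = A 2 ![a, A 2 ![b,c]] := by
    intro a b c ha hb hc
    rw [← split21 a b c ha hb hc, split12 a b c ha hb hc]
  -- package into an operation on ℝ≥0
  set Fop : ℝ≥0 → ℝ≥0 → ℝ≥0 :=
    fun p q => ⟨A 2 ![(p:ℝ), (q:ℝ)], hGnn p q p.2 q.2⟩ with hFop
  have hNice : Stmt0Aux.NiceOp Fop := by
    constructor
    · intro p
      refine Continuous.subtype_mk ?_ _
      exact (hA2cont1 p p.2).comp_continuous continuous_subtype_val (fun q => q.2)
    · intro q
      refine Continuous.subtype_mk ?_ _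
      exact (hA2cont2 q q.2).comp_continuous continuous_subtype_val (fun p => p.2)
    · intro p q r hqr
      have := hA2mono1 (p:ℝ) p.2 q.2 r.2 (NNReal.coe_lt_coe.mpr hqr)
      exact this
    · intro q p r hpr
      have := hA2mono2 (q:ℝ) q.2 p.2 r.2 (NNReal.coe_lt_coe.mpr hpr)
      exact this
    · intro p q r
      refine Subtype.ext ?_
      exact hassoc2 p q r p.2 q.2 r.2
    · intro p
      refine Subtype.ext ?_
      exact hid_r p p.2
    · intro p
      refine Subtype.ext ?_
      exact hid_l p p.2
  obtain ⟨u₀, hu₀c, hu₀s, hu₀z, hu₀a⟩ := Stmt0Aux.core hNice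
  -- the real-valued utility
  refine ⟨fun x => (u₀ (Real.toNNReal x) : ℝ), ?_, ?_, ?_, ?_, ?_⟩
  · exact (NNReal.continuous_coe.comp (hu₀c.comp continuous_real_toNNReal)).continuousOn
  · intro x hx y hy hxy
    have h1 : Real.toNNReal x < Real.toNNReal y :=
      (Real.toNNReal_lt_toNNReal_iff (lt_of_le_of_lt hx hxy)).mpr hxy
    exact_mod_cast hu₀s h1
  · show (u₀ (Real.toNNReal 0) : ℝ) = 0
    rw [Real.toNNReal_zero, hu₀z]; rfl
  · intro x _; exact (u₀ _).2
  · -- key additivity on reals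
    have key : ∀ a b : ℝ, 0 ≤ a → 0 ≤ b →
        (u₀ (Real.toNNReal (A 2 ![a, b])) : ℝ) =
          (u₀ (Real.toNNReal a) : ℝ) + (u₀ (Real.toNNReal b) : ℝ) := by
      intro a b ha hb
      have e : Real.toNNReal (A 2 ![a, b]) = Fop (Real.toNNReal a) (Real.toNNReal b) := by
        refine NNReal.coe_injective ?_
        rw [Real.coe_toNNReal _ (hGnn a b ha hb)]
        show A 2 ![a, b] = A 2 ![(Real.toNNReal a : ℝ), (Real.toNNReal b : ℝ)]
        rw [Real.coe_toNNReal a ha, Real.coe_toNNReal b hb]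
      rw [e, hu₀a, NNReal.coe_add]
    intro n hn x hx
    induction n with
    | zero => omega
    | succ n ih =>
        by_cases hn0 : n = 0
        · subst hn0
          have e : x = fun _ => x 0 := by
            funext i; fin_cases i; rfl
          have hA1 : A 1 x = x 0 := by
            conv_lhs => rw [e]
            exact hA_one (x 0) (hx 0)
          show (u₀ (Real.toNNReal (A 1 x)) : ℝ) = ∑ i : Fin 1, (u₀ (Real.toNNReal (x i)) : ℝ)
          rw [hA1, Fin.sum_univ_one]
        · have hn1 : 1 ≤ n := Nat.one_le_iff_ne_zero.mpr hn0
          have h := hA_assoc n 1 hn1 le_rfl x hx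
          have eback : (fun j : Fin 1 => x (Fin.natAdd n j)) = fun _ => x (Fin.last n) := by
            funext j; fin_cases j; rfl
          rw [eback, hA_one _ (hx _)] at h
          have hfr : ∀ j : Fin n, (0:ℝ) ≤ x (Fin.castAdd 1 j) := fun j => hx _
          have ihn : (u₀ (Real.toNNReal (A n (fun j => x (Fin.castAdd 1 j)))) : ℝ)
              = ∑ j : Fin n, (u₀ (Real.toNNReal (x (Fin.castAdd 1 j))) : ℝ) := ih hn1 _ hfr
          show (u₀ (Real.toNNReal (A (n+1) x)) : ℝ)
              = ∑ i : Fin (n+1), (u₀ (Real.toNNReal (x i)) : ℝ)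
          rw [h, key _ _ (hA_nonneg n _ hfr) (hx _), ihn, Fin.sum_univ_castSucc]
          rfl
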